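/- arXiv:1905.11146 — 4 statements merged into one kernel-verified Lean document; each statement's English description precedes it below -/
import Mathlib

section
/- Let p be an odd prime and α, β ∈ 1 + pℤ_p multiplicatively independent such that β^ℤ is dense in 1 + p^kℤ_p where k = v_p(β − 1). Then α^ℤ is codense in α^ℤ · β^ℤ: for every g ∈ α^ℤ β^ℤ and every N ∈ ℕ there exists h ∈ (α^ℤ β^ℤ) \ α^ℤ with v_p(g − h) ≥ N. -/
open Finset in
lemma key_pow_p {p : ℕ} [hp : Fact p.Prime] (x : ℤ_[p]) (k : ℕ)
    (h : ‖x - 1‖ ≤ (p : ℝ) ^ (-(k + 1) : ℤ)) :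
    ‖x ^ p - 1‖ ≤ (p : ℝ) ^ (-(k + 2) : ℤ) := by
  have hp1 : (1 : ℝ) < p := by exact_mod_cast hp.out.one_lt
  have hx1 : ‖x - 1‖ ≤ (p : ℝ)⁻¹ := by
    refine h.trans ?_
    rw [← zpow_neg_one]
    exact zpow_le_zpow_right₀ hp1.le (by omega)
  have hpow : ∀ i : ℕ, ‖x ^ i - 1‖ ≤ ‖x - 1‖ := by
    intro i
    calc ‖x ^ i - 1‖ = ‖(∑ j ∈ range i, x ^ j) * (x - 1)‖ := by rw [geom_sum_mul]
      _ = ‖∑ j ∈ range i, x ^ j‖ * ‖x - 1‖ := norm_mul _ _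
      _ ≤ 1 * ‖x - 1‖ := by gcongr ?_ * _; exact PadicInt.norm_le_one _
      _ = ‖x - 1‖ := one_mul _
  have hsum : ‖∑ j ∈ range p, x ^ j‖ ≤ (p : ℝ)⁻¹ := by
    have heq : (∑ j ∈ range p, x ^ j) = (∑ j ∈ range p, (x ^ j - 1)) + p := by
      rw [Finset.sum_sub_distrib]
      simp [Finset.card_range]
    rw [heq]
    refine (PadicInt.nonarchimedean _ _).trans (max_le ?_ ?_)
    · exact IsUltrametricDist.norm_sum_le_of_forall_le_of_nonneg (by positivity)
        (fun i _ => (hpow i).trans hx1)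
    · rw [PadicInt.norm_p]
  calc ‖x ^ p - 1‖ = ‖(∑ j ∈ range p, x ^ j) * (x - 1)‖ := by rw [geom_sum_mul]
    _ = ‖∑ j ∈ range p, x ^ j‖ * ‖x - 1‖ := norm_mul _ _
    _ ≤ (p : ℝ)⁻¹ * (p : ℝ) ^ (-(k + 1) : ℤ) := by
        exact mul_le_mul hsum h (norm_nonneg _) (by positivity)
    _ = (p : ℝ) ^ (-(k + 2) : ℤ) := by
        rw [← zpow_neg_one, ← zpow_add₀ (by positivity)]; ring_nf

lemma key_pow_iter {p : ℕ} [hp : Fact p.Prime] (x : ℤ_[p])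
    (h : ‖x - 1‖ ≤ (p : ℝ) ^ (-1 : ℤ)) (t : ℕ) :
    ‖x ^ p ^ t - 1‖ ≤ (p : ℝ) ^ (-(t + 1) : ℤ) := by
  induction t with
  | zero => simpa using h
  | succ t ih =>
      have := key_pow_p (x ^ p ^ t) t ih
      rw [← pow_mul, ← pow_succ] at this
      have he : (-(↑(t + 1) + 1) : ℤ) = (-(↑t + 2) : ℤ) := by push_cast; ring
      rw [he]
      exact this

theorem stmt_9 (p : ℕ) [Fact p.Prime] (hp2 : p ≠ 2) (α β : ℤ_[p]ˣ)
    (hα : ∃ z : ℤ_[p], (α : ℤ_[p]) = 1 + (p : ℤ_[p]) * z)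
    (hβ : ∃ z : ℤ_[p], (β : ℤ_[p]) = 1 + (p : ℤ_[p]) * z)
    (hind : ∀ n m : ℤ, α ^ n * β ^ m = 1 → n = 0 ∧ m = 0)
    -- β^ℤ is dense in 1 + p^k ℤ_p where k = v_p(β - 1)
    (hdense : ∀ x : ℤ_[p], ‖x - 1‖ ≤ ‖(β : ℤ_[p]) - 1‖ →
      ∀ N : ℕ, ∃ m : ℤ, ‖x - ((β ^ m : ℤ_[p]ˣ) : ℤ_[p])‖ ≤ (p : ℝ) ^ (-(N : ℤ))) :
    -- α^ℤ is codense in α^ℤ·β^ℤ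
    ∀ n m : ℤ, ∀ N : ℕ, ∃ n' m' : ℤ, m' ≠ 0 ∧
      ‖((α ^ n * β ^ m : ℤ_[p]ˣ) : ℤ_[p]) - ((α ^ n' * β ^ m' : ℤ_[p]ˣ) : ℤ_[p])‖
        ≤ (p : ℝ) ^ (-(N : ℤ)) := by
  intro n m N
  have hp1 : (1 : ℝ) < p := by exact_mod_cast (Fact.out : p.Prime).one_lt
  by_cases hm : m = 0
  · -- use m' = p^N
    refine ⟨n, ((p ^ N : ℕ) : ℤ), Int.natCast_ne_zero.mpr (pow_ne_zero _ (Fact.out : p.Prime).pos.ne'), ?_⟩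
    have hβ1 : ‖(β : ℤ_[p]) - 1‖ ≤ (p : ℝ) ^ (-1 : ℤ) := by
      obtain ⟨z, hz⟩ := hβ
      rw [hz, add_sub_cancel_left, norm_mul, zpow_neg_one]
      calc ‖(p : ℤ_[p])‖ * ‖z‖ ≤ ‖(p : ℤ_[p])‖ * 1 :=
            mul_le_mul_of_nonneg_left (PadicInt.norm_le_one z) (norm_nonneg _)
        _ = (p : ℝ)⁻¹ := by rw [mul_one, PadicInt.norm_p]
    have hkey := key_pow_iter (β : ℤ_[p]) hβ1 N
    have hrw : ((α ^ n * β ^ m : ℤ_[p]ˣ) : ℤ_[p]) - ((α ^ n * β ^ ((p ^ N : ℕ) : ℤ) : ℤ_[p]ˣ) : ℤ_[p])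
        = ((α ^ n : ℤ_[p]ˣ) : ℤ_[p]) * (1 - (β : ℤ_[p]) ^ p ^ N) := by
      rw [hm, zpow_zero, zpow_natCast]
      push_cast [Units.val_mul, Units.val_one, Units.val_pow_eq_pow_val]
      ring
    rw [hrw, norm_mul, PadicInt.norm_units, one_mul, norm_sub_rev]
    refine hkey.trans ?_
    exact zpow_le_zpow_right₀ hp1.le (by omega)
  · exact ⟨n, m, hm, by rw [sub_self, norm_zero]; positivity⟩
end

section
/- Let K be a field of characteristic zero, G a subgroup of K^×, and Γ a subgroup of G such that every equation a_1 x_1 + … + a_n x_n = 1 with a_i ∈ ℚ^× has the same nondegenerate solutions in Γ^n as in G^n. If g ∈ G is algebraic over ℚ(Γ) of degree d, then g^d ∈ Γ. -/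
private lemma mann_core {K : Type*} [Field K] [CharZero K] (G Γ : Subgroup Kˣ) (hΓG : Γ ≤ G)
    (hMann : ∀ (n : ℕ) (a : Fin n → ℚ), (∀ i, a i ≠ 0) →
      ∀ g : Fin n → Kˣ, (∀ i, g i ∈ G) →
        (∑ i, (a i : K) * ((g i : Kˣ) : K)) = 1 →
        (∀ I : Finset (Fin n), I.Nonempty →
          (∑ i ∈ I, (a i : K) * ((g i : Kˣ) : K)) ≠ 0) →
        ∀ i, g i ∈ Γ)
    (g : Kˣ) (hg : g ∈ G) (d : ℕ) {ι : Type*} (q : ι → ℚ) (γ : ι → Kˣ) (e : ι → ℕ)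
    (s : Finset ι) :
    (∀ p ∈ s, q p ≠ 0) → (∀ p ∈ s, γ p ∈ Γ) → (∀ p ∈ s, e p ≤ d) →
    (∑ p ∈ s, (q p : K) * ((γ p : K) * (g : K) ^ e p)) = 0 →
    (∑ p ∈ s.filter (fun p => e p = d), (q p : K) * ((γ p : K))) ≠ 0 →
    ∃ k, 0 < k ∧ k ≤ d ∧ g ^ k ∈ Γ := by
  classical
  induction s using Finset.strongInduction with
  | _ s ih =>
  intro hq hγ he hsum hbd
  set f : ι → K := fun p => (q p : K) * ((γ p : K) * (g : K) ^ e p) with hf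
  -- choose a minimal nonempty vanishing subset T of s
  have hsP : s ∈ (s.powerset).filter (fun T => T.Nonempty ∧ ∑ p ∈ T, f p = 0) := by
    refine Finset.mem_filter.mpr ⟨Finset.mem_powerset_self s, ?_, hsum⟩
    · rcases Finset.eq_empty_or_nonempty s with rfl | hs
      · exfalso; apply hbd; simp
      · exact hs
  obtain ⟨T, hTmem, hTmin⟩ := Finset.exists_min_image _ Finset.card ⟨s, hsP⟩
  rw [Finset.mem_filter, Finset.mem_powerset] at hTmem
  obtain ⟨hTs, hTne, hT0⟩ := hTmem
  -- nondegeneracy of T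
  have hnondeg : ∀ S ⊆ T, S.Nonempty → S ≠ T → ∑ p ∈ S, f p ≠ 0 := by
    intro S hST hSne hSneq h0
    have hmem : S ∈ (s.powerset).filter (fun T => T.Nonempty ∧ ∑ p ∈ T, f p = 0) :=
      Finset.mem_filter.mpr ⟨Finset.mem_powerset.mpr (hST.trans hTs), hSne, h0⟩
    have := hTmin S hmem
    have hlt : S.card < T.card := Finset.card_lt_card (lt_of_le_of_ne hST hSneq)
    omega
  by_cases hconst : ∀ p ∈ T, ∀ p' ∈ T, e p = e p'
  · -- all exponents in T equal: remove T and recurse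
    obtain ⟨t0, ht0⟩ := hTne
    have hTne' : T.Nonempty := ⟨t0, ht0⟩
    set c := e t0 with hc
    have hTqγ : ∑ p ∈ T, (q p : K) * (γ p : K) = 0 := by
      have h1 : ∑ p ∈ T, f p = (∑ p ∈ T, (q p : K) * (γ p : K)) * (g : K) ^ c := by
        rw [Finset.sum_mul]
        refine Finset.sum_congr rfl fun p hp => ?_
        rw [hf]; simp only; rw [hconst p hp t0 ht0, mul_assoc]
      have hgc : ((g : K)) ^ c ≠ 0 := pow_ne_zero _ (Units.ne_zero g)
      have h2 := hT0
      rw [h1] at h2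
      exact (mul_eq_zero.mp h2).resolve_right hgc
    have hTfilter : ∑ p ∈ T.filter (fun p => e p = d), (q p : K) * (γ p : K) = 0 := by
      by_cases hcd : c = d
      · rw [Finset.filter_true_of_mem fun p hp => (hconst p hp t0 ht0).trans hcd]
        exact hTqγ
      · rw [Finset.filter_false_of_mem fun p hp => by
          rw [hconst p hp t0 ht0]; exact hcd]
        simp
    refine ih (s \ T) (Finset.sdiff_ssubset hTs hTne')
      (fun p hp => hq p (Finset.mem_sdiff.mp hp).1)
      (fun p hp => hγ p (Finset.mem_sdiff.mp hp).1)
      (fun p hp => he p (Finset.mem_sdiff.mp hp).1) ?_ ?_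
    · rw [Finset.sum_sdiff_eq_sub hTs, hsum, hT0, sub_zero]
    · have hfe : (s \ T).filter (fun p => e p = d)
          = s.filter (fun p => e p = d) \ T.filter (fun p => e p = d) := by
        ext p
        simp only [Finset.mem_filter, Finset.mem_sdiff]
        tauto
      rw [hfe, Finset.sum_sdiff_eq_sub (Finset.filter_subset_filter _ hTs), hTfilter, sub_zero]
      exact hbd
  · -- two distinct exponents in T
    push_neg at hconst
    obtain ⟨i, hi, j, hj, hij⟩ := hconst
    have hqi : q i ≠ 0 := hq i (hTs hi)
    have hfi : f i ≠ 0 := by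
      rw [hf]
      refine mul_ne_zero ?_ (mul_ne_zero (Units.ne_zero _) (pow_ne_zero _ (Units.ne_zero g)))
      exact_mod_cast Rat.cast_ne_zero.mpr hqi
    set n := (T.erase i).card with hn
    set eqv : Fin n ≃ {x // x ∈ T.erase i} := (T.erase i).equivFin.symm with heqv
    have hmem' : ∀ m : Fin n, (eqv m : ι) ∈ T.erase i := fun m => (eqv m).2
    have hinj : Function.Injective (fun m : Fin n => (eqv m : ι)) :=
      fun a b h => eqv.injective (Subtype.ext h)
    have hsum_eqv : ∀ F : ι → K, ∑ m : Fin n, F (eqv m) = ∑ t ∈ T.erase i, F t := by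
      intro F
      rw [Equiv.sum_comp eqv (fun x => F (x : ι)), Finset.sum_coe_sort]
    set a : Fin n → ℚ := fun m => -(q (eqv m)) / (q i) with ha
    set u : Fin n → Kˣ := fun m =>
      (γ (eqv m) * g ^ e (eqv m)) * (γ i * g ^ e i)⁻¹ with hu
    have haz : ∀ m, a m ≠ 0 := by
      intro m
      have := hq _ (hTs (Finset.mem_of_mem_erase (hmem' m)))
      exact div_ne_zero (neg_ne_zero.mpr this) hqi
    have huG : ∀ m, u m ∈ G := by
      intro m
      have h1 : γ (eqv m) ∈ G := hΓG (hγ _ (hTs (Finset.mem_of_mem_erase (hmem' m))))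
      have h2 : γ i ∈ G := hΓG (hγ _ (hTs hi))
      exact mul_mem (mul_mem h1 (pow_mem hg _)) (inv_mem (mul_mem h2 (pow_mem hg _)))
    have hterm : ∀ m : Fin n, (a m : K) * ((u m : Kˣ) : K) = (f i)⁻¹ * -(f (eqv m)) := by
      intro m
      have h1 : (q i : K) ≠ 0 := by exact_mod_cast Rat.cast_ne_zero.mpr hqi
      have h2 : ((γ i : K)) ≠ 0 := Units.ne_zero _
      have h3 : ((g : K)) ^ e i ≠ 0 := pow_ne_zero _ (Units.ne_zero g)
      rw [ha, hu, hf]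
      simp only [Units.val_mul, Units.val_pow_eq_pow_val, Units.val_inv_eq_inv_val]
      push_cast
      field_simp
    have heq1 : ∑ m, (a m : K) * ((u m : Kˣ) : K) = 1 := by
      calc ∑ m, (a m : K) * ((u m : Kˣ) : K)
          = ∑ m : Fin n, (f i)⁻¹ * -(f (eqv m)) :=
            Finset.sum_congr rfl fun m _ => hterm m
        _ = (f i)⁻¹ * -(∑ m : Fin n, f (eqv m)) := by
            rw [← Finset.sum_neg_distrib, Finset.mul_sum]
        _ = (f i)⁻¹ * -(∑ t ∈ T.erase i, f t) := by rw [hsum_eqv (fun t => f t)]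
        _ = 1 := by
            rw [Finset.sum_erase_eq_sub hi, hT0, zero_sub, neg_neg, inv_mul_cancel₀ hfi]
    have hnd : ∀ I : Finset (Fin n), I.Nonempty →
        (∑ m ∈ I, (a m : K) * ((u m : Kˣ) : K)) ≠ 0 := by
      intro I hI
      set I' : Finset ι := I.image (fun m => (eqv m : ι)) with hI'
      have hI'ne : I'.Nonempty := hI.image _
      have hI'sub : I' ⊆ T := by
        intro t ht
        obtain ⟨m, _, rfl⟩ := Finset.mem_image.mp ht
        exact Finset.mem_of_mem_erase (hmem' m)
      have hI'neq : I' ≠ T := by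
        intro h
        have : i ∈ I' := h ▸ hi
        obtain ⟨m, _, hm⟩ := Finset.mem_image.mp this
        exact (Finset.mem_erase.mp (hmem' m)).1 hm
      have h2 : ∑ m ∈ I, (a m : K) * ((u m : Kˣ) : K) = (f i)⁻¹ * -(∑ t ∈ I', f t) := by
        rw [hI', Finset.sum_image (fun x _ y _ h => hinj h)]
        calc ∑ m ∈ I, (a m : K) * ((u m : Kˣ) : K)
            = ∑ m ∈ I, (f i)⁻¹ * -(f (eqv m)) := Finset.sum_congr rfl fun m _ => hterm m
          _ = (f i)⁻¹ * -(∑ m ∈ I, f (eqv m)) := by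
              rw [← Finset.sum_neg_distrib, Finset.mul_sum]
      rw [h2]
      exact mul_ne_zero (inv_ne_zero hfi)
        (neg_ne_zero.mpr (hnondeg I' hI'sub hI'ne hI'neq))
    have hMannres := hMann n a haz u huG heq1 hnd
    have key : ∀ t ∈ T.erase i, (γ t * g ^ e t) * (γ i * g ^ e i)⁻¹ ∈ Γ := by
      intro t ht
      have := hMannres (eqv.symm ⟨t, ht⟩)
      rw [hu] at this
      simpa only [Equiv.apply_symm_apply] using this
    have hji : j ≠ i := fun h => hij (by rw [h])
    have htj : j ∈ T.erase i := Finset.mem_erase.mpr ⟨hji, hj⟩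
    have hx := key j htj
    have hγj : γ j ∈ Γ := hγ j (hTs hj)
    have hγi : γ i ∈ Γ := hγ i (hTs hi)
    have h2 : ((γ i : K)) ≠ 0 := Units.ne_zero _
    have h3 : ((γ j : K)) ≠ 0 := Units.ne_zero _
    rcases hij.lt_or_gt with hlt | hlt
    · -- e i < e j ; k = e j - e i
      obtain ⟨k, hk⟩ : ∃ k, e j = k + e i := ⟨e j - e i, by omega⟩
      refine ⟨k, by omega, by have := he j (hTs hj); omega, ?_⟩
      have hgk : g ^ k
          = (γ j)⁻¹ * γ i * ((γ j * g ^ e j) * (γ i * g ^ e i)⁻¹) := by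
        refine Units.ext ?_
        simp only [Units.val_mul, Units.val_pow_eq_pow_val, Units.val_inv_eq_inv_val]
        rw [hk, pow_add]
        have h4 : ((g : K)) ^ e i ≠ 0 := pow_ne_zero _ (Units.ne_zero g)
        field_simp
      rw [hgk]
      exact mul_mem (mul_mem (inv_mem hγj) hγi) hx
    · -- e j < e i ; k = e i - e j
      obtain ⟨k, hk⟩ : ∃ k, e i = k + e j := ⟨e i - e j, by omega⟩
      refine ⟨k, by omega, by have := he i (hTs hi); omega, ?_⟩
      have hgk : g ^ k
          = (γ i)⁻¹ * γ j * ((γ j * g ^ e j) * (γ i * g ^ e i)⁻¹)⁻¹ := by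
        refine Units.ext ?_
        simp only [Units.val_mul, Units.val_pow_eq_pow_val, Units.val_inv_eq_inv_val,
          mul_inv_rev, inv_inv]
        rw [hk, pow_add]
        have h4 : ((g : K)) ^ e j ≠ 0 := pow_ne_zero _ (Units.ne_zero g)
        field_simp
      rw [hgk]
      exact mul_mem (mul_mem (inv_mem hγi) hγj) (inv_mem hx)

theorem stmt_11 (K : Type*) [Field K] [CharZero K] (G Γ : Subgroup Kˣ) (hΓG : Γ ≤ G)
    -- every nondegenerate solution in G of a rational unit equation lies in Γ
    (hMann : ∀ (n : ℕ) (a : Fin n → ℚ), (∀ i, a i ≠ 0) →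
      ∀ g : Fin n → Kˣ, (∀ i, g i ∈ G) →
        (∑ i, (a i : K) * ((g i : Kˣ) : K)) = 1 →
        (∀ I : Finset (Fin n), I.Nonempty →
          (∑ i ∈ I, (a i : K) * ((g i : Kˣ) : K)) ≠ 0) →
        ∀ i, g i ∈ Γ)
    (g : Kˣ) (hg : g ∈ G) (d : ℕ)
    (hint : IsIntegral (Subfield.closure (Units.val '' (Γ : Set Kˣ))) (g : K))
    (hd : (minpoly (Subfield.closure (Units.val '' (Γ : Set Kˣ))) (g : K)).natDegree = d) :
    g ^ d ∈ Γ := by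
  classical
  set S : Set K := Units.val '' (Γ : Set Kˣ) with hS
  -- the subring closure of S is contained in the ℤ-span of S
  have hspan : ∀ x ∈ Subring.closure S, x ∈ Submodule.span ℤ S := by
    intro x hx
    rw [Subring.mem_closure_iff] at hx
    set M : Submonoid K :=
      { carrier := S
        one_mem' := ⟨1, Γ.one_mem, rfl⟩
        mul_mem' := by
          rintro a b ⟨u, hu, rfl⟩ ⟨v, hv, rfl⟩
          exact ⟨u * v, Γ.mul_mem hu hv, rfl⟩ } with hM
    have hle : Submonoid.closure S ≤ M := Submonoid.closure_le.mpr (by intro y hy; exact hy)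
    have hset : (Submonoid.closure S : Set K) = S :=
      le_antisymm hle Submonoid.subset_closure
    rw [hset] at hx
    rw [← Submodule.span_int_eq_addSubgroupClosure] at hx
    exact hx
  set F := Subfield.closure S with hF
  set p := minpoly F ((g : Kˣ) : K) with hp
  have hmonic : p.Monic := minpoly.monic hint
  have hdeg' : p.natDegree = d := by rw [hp]; exact hd
  have h0 : ∑ i ∈ Finset.range (d + 1), ((p.coeff i : K)) * ((g : K)) ^ i = 0 := by
    have hae : Polynomial.aeval ((g : K)) p = 0 := by rw [hp]; exact minpoly.aeval F _
    have h1 := Polynomial.aeval_eq_sum_range (R := F) (p := p) ((g : K))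
    rw [hae, hdeg'] at h1
    calc ∑ i ∈ Finset.range (d + 1), ((p.coeff i : K)) * ((g : K)) ^ i
        = ∑ i ∈ Finset.range (d + 1), p.coeff i • ((g : K)) ^ i := by
          refine Finset.sum_congr rfl fun i _ => ?_
          rw [Algebra.smul_def]; rfl
      _ = 0 := h1.symm
  have hcoef : ∀ i : ℕ, ∃ y z : K, y ∈ Subring.closure S ∧ z ∈ Subring.closure S ∧ z ≠ 0 ∧
      y / z = ((p.coeff i : K)) := by
    intro i
    obtain ⟨y, hy, z, hz, hyz⟩ := Subfield.mem_closure_iff.mp (p.coeff i).2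
    by_cases hz0 : z = 0
    · refine ⟨0, 1, zero_mem _, one_mem _, one_ne_zero, ?_⟩
      rw [← hyz, hz0, div_zero, zero_div]
    · exact ⟨y, z, hy, hz, hz0, hyz⟩
  choose A B hA hB hB0 hAB using hcoef
  set Q : K := ∏ i ∈ Finset.range (d + 1), B i with hQ
  have hQ0 : Q ≠ 0 := Finset.prod_ne_zero_iff.mpr fun i _ => hB0 i
  set N : ℕ → K := fun i => A i * ∏ j ∈ (Finset.range (d + 1)).erase i, B j with hN
  have hNmem : ∀ i, N i ∈ Subring.closure S := fun i =>
    mul_mem (hA i) (prod_mem fun j _ => hB j)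
  have hNeq : ∀ i ∈ Finset.range (d + 1), N i = ((p.coeff i : K)) * Q := by
    intro i hi
    rw [hN]
    simp only
    rw [← hAB i, hQ, ← Finset.mul_prod_erase _ _ hi]
    field_simp [hB0 i]
  have hNsum : ∑ i ∈ Finset.range (d + 1), N i * ((g : K)) ^ i = 0 := by
    calc ∑ i ∈ Finset.range (d + 1), N i * ((g : K)) ^ i
        = ∑ i ∈ Finset.range (d + 1), Q * (((p.coeff i : K)) * ((g : K)) ^ i) := by
          refine Finset.sum_congr rfl fun i hi => ?_
          rw [hNeq i hi]; ring
      _ = Q * ∑ i ∈ Finset.range (d + 1), ((p.coeff i : K)) * ((g : K)) ^ i := by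
          rw [Finset.mul_sum]
      _ = 0 := by rw [h0, mul_zero]
  have hcd1 : p.coeff d = 1 := by
    rw [← hd]; exact hmonic.coeff_natDegree
  have hNd : N d ≠ 0 := by
    rw [hNeq d (Finset.self_mem_range_succ d), hcd1]
    simpa using hQ0
  -- representations as finite ℤ-combinations of S
  have hrep : ∀ i : ℕ, ∃ c : K →₀ ℤ, ↑c.support ⊆ S ∧ (c.sum fun mi r => r • mi) = N i :=
    fun i => Submodule.mem_span_set.mp (hspan _ (hNmem i))
  choose c hcs hcsum using hrep
  set s : Finset ((_ : ℕ) × K) := (Finset.range (d + 1)).sigma (fun i => (c i).support)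
    with hs
  set qf : (_ : ℕ) × K → ℚ := fun pr => ((c pr.1 pr.2 : ℤ) : ℚ) with hqf
  have hwit : ∀ x ∈ S, ∃ u : Kˣ, u ∈ Γ ∧ ((u : Kˣ) : K) = x := by
    rintro x ⟨u, hu, rfl⟩; exact ⟨u, hu, rfl⟩
  set γf : (_ : ℕ) × K → Kˣ :=
    fun pr => if h : pr.2 ∈ S then (hwit pr.2 h).choose else 1 with hγf
  have hγf' : ∀ pr : (_ : ℕ) × K, pr.2 ∈ S → γf pr ∈ Γ ∧ ((γf pr : Kˣ) : K) = pr.2 := by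
    intro pr hpr
    rw [hγf]
    simp only [dif_pos hpr]
    exact ⟨(hwit pr.2 hpr).choose_spec.1, (hwit pr.2 hpr).choose_spec.2⟩
  have hmemS : ∀ pr ∈ s, pr.2 ∈ S := by
    intro pr hpr
    rw [hs, Finset.mem_sigma] at hpr
    exact hcs pr.1 hpr.2
  have hinner : ∀ i : ℕ, ∑ x ∈ (c i).support, ((c i x : K)) * x = N i := by
    intro i
    rw [← hcsum i]
    rw [Finsupp.sum]
    refine Finset.sum_congr rfl fun x _ => ?_
    rw [zsmul_eq_mul]
  obtain ⟨k, hk0, hkd, hkΓ⟩ := mann_core G Γ hΓG hMann g hg d qf γf (fun pr : (_ : ℕ) × K => pr.1) s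
    (by
      intro pr hpr
      rw [hs, Finset.mem_sigma] at hpr
      simp only [hqf]
      exact_mod_cast Finsupp.mem_support_iff.mp hpr.2)
    (fun pr hpr => (hγf' pr (hmemS pr hpr)).1)
    (by
      intro pr hpr
      rw [hs, Finset.mem_sigma, Finset.mem_range] at hpr
      show pr.1 ≤ d
      omega)
    (by
      beta_reduce
      rw [hs, Finset.sum_sigma]
      rw [← hNsum]
      refine Finset.sum_congr rfl fun i hi => ?_
      rw [← hinner i, Finset.sum_mul]
      refine Finset.sum_congr rfl fun x hx => ?_
      have hxS : x ∈ S := hcs i hx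
      rw [(hγf' ⟨i, x⟩ hxS).2]
      simp only [hqf]
      push_cast
      ring)
    (by
      beta_reduce
      have hfe : s.filter (fun pr => pr.1 = d)
          = ({d} : Finset ℕ).sigma (fun i => (c i).support) := by
        ext pr
        rcases pr with ⟨i, x⟩
        simp only [hs, Finset.mem_filter, Finset.mem_sigma, Finset.mem_range,
          Finset.mem_singleton]
        constructor
        · rintro ⟨⟨h1, h2⟩, rfl⟩; exact ⟨rfl, h2⟩
        · rintro ⟨rfl, h2⟩; exact ⟨⟨by omega, h2⟩, rfl⟩
      rw [hfe, Finset.sum_sigma, Finset.sum_singleton]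
      have : ∑ x ∈ (c d).support, ((qf ⟨d, x⟩ : K)) * ((γf ⟨d, x⟩ : Kˣ) : K) = N d := by
        rw [← hinner d]
        refine Finset.sum_congr rfl fun x hx => ?_
        have hxS : x ∈ S := hcs d hx
        rw [(hγf' ⟨d, x⟩ hxS).2, hqf]
        push_cast
        ring
      rw [this]
      exact hNd)
  -- conclude k = d
  have hgkF : ((g : K)) ^ k ∈ F := by
    refine Subfield.subset_closure ?_
    exact ⟨g ^ k, hkΓ, by rw [Units.val_pow_eq_pow_val]⟩
  set cF : F := ⟨((g : K)) ^ k, hgkF⟩ with hcF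
  have hP0 : (Polynomial.X ^ k - Polynomial.C cF : Polynomial F) ≠ 0 := by
    intro h
    have h2 : (Polynomial.X ^ k - Polynomial.C cF : Polynomial F).natDegree = k :=
      Polynomial.natDegree_X_pow_sub_C
    rw [h] at h2
    simp only [Polynomial.natDegree_zero] at h2
    omega
  have haevP : Polynomial.aeval ((g : K)) (Polynomial.X ^ k - Polynomial.C cF) = 0 := by
    rw [map_sub, map_pow, Polynomial.aeval_X, Polynomial.aeval_C]
    have : (algebraMap F K) cF = ((g : K)) ^ k := rfl
    rw [this, sub_self]
  have hdeg := minpoly.degree_le_of_ne_zero F ((g : K)) hP0 haevP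
  have hdk : d ≤ k := by
    have h3 := Polynomial.natDegree_le_natDegree hdeg
    rw [Polynomial.natDegree_X_pow_sub_C] at h3
    rw [← hp] at h3  -- ensure p
    rw [hd] at h3
    exact h3
  have hkdeq : k = d := le_antisymm hkd hdk
  rw [← hkdeq]
  exact hkΓ
end

section
/- Let p be an odd prime and x ∈ ℚ_p. Then v_p(x) ≥ 0 if and only if 1 + p x² is a square in ℚ_p. -/
theorem stmt_16 (p : ℕ) [Fact p.Prime] (hp2 : p ≠ 2) (x : ℚ_[p]) :
    ‖x‖ ≤ 1 ↔ ∃ y : ℚ_[p], y ^ 2 = 1 + (p : ℚ_[p]) * x ^ 2 := by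
  have hp := Fact.out (p := p.Prime)
  have hp1 : (1 : ℝ) < (p : ℝ) := by exact_mod_cast hp.one_lt
  constructor
  · intro hx
    -- work in ℤ_[p]
    set x' : ℤ_[p] := ⟨x, hx⟩ with hx'
    set c : ℤ_[p] := 1 + (p : ℤ_[p]) * x' ^ 2 with hc
    set F : Polynomial ℤ_[p] := Polynomial.X ^ 2 - Polynomial.C c with hF
    have h2 : ‖(2 : ℤ_[p])‖ = 1 := by
      rcases lt_or_eq_of_le (PadicInt.norm_le_one (2 : ℤ_[p])) with h | h
      · exfalso
        have hd : (p : ℤ) ∣ 2 := (PadicInt.norm_int_lt_one_iff_dvd (p := p) 2).mp (by exact_mod_cast h)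
        have hd' : p ∣ 2 := by exact_mod_cast hd
        exact hp2 ((Nat.prime_dvd_prime_iff_eq hp Nat.prime_two).mp hd')
      · exact h
    have heval : F.eval 1 = -((p : ℤ_[p]) * x' ^ 2) := by
      simp [hF, hc]
    have hderiv : F.derivative.eval 1 = 2 := by
      simp [hF]
      exact one_add_one_eq_two
    have hnorm : ‖F.eval 1‖ < ‖F.derivative.eval 1‖ ^ 2 := by
      rw [heval, hderiv, h2, norm_neg, one_pow]
      calc ‖(p : ℤ_[p]) * x' ^ 2‖ ≤ ‖(p : ℤ_[p])‖ * 1 := by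
            rw [norm_mul]
            gcongr
            exact PadicInt.norm_le_one _
        _ = (p : ℝ)⁻¹ := by rw [mul_one, PadicInt.norm_p]
        _ < 1 := by rw [inv_lt_one_iff₀]; right; exact hp1
    obtain ⟨z, hz, -⟩ := hensels_lemma hnorm
    refine ⟨(z : ℚ_[p]), ?_⟩
    have : z ^ 2 = c := by
      have := hz
      simp [hF, Polynomial.eval_pow, sub_eq_zero] at this
      exact this
    have := congrArg (PadicInt.Coe.ringHom (p := p)) this
    simp only [hc, map_pow, map_add, map_mul, map_one, map_natCast] at this
    exact this
  · rintro ⟨y, hy⟩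
    by_contra hx
    push_neg at hx
    have hx0 : x ≠ 0 := by rintro rfl; norm_num at hx
    have hp0 : (0:ℝ) < (p:ℝ) := by positivity
    have hpne1 : (p:ℝ) ≠ 1 := ne_of_gt hp1
    have hpQ : (p : ℚ_[p]) ≠ 0 := Nat.cast_ne_zero.mpr hp.ne_zero
    have hpx : (p : ℚ_[p]) * x ^ 2 ≠ 0 := mul_ne_zero hpQ (pow_ne_zero _ hx0)
    -- valuation of x is negative
    set v := x.valuation with hv
    have hxnorm : ‖x‖ = (p:ℝ) ^ (-v) := Padic.norm_eq_zpow_neg_valuation hx0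
    have hvneg : v < 0 := by
      by_contra hvnn
      push_neg at hvnn
      have : ‖x‖ ≤ (p:ℝ) ^ (0:ℤ) := by
        rw [hxnorm]
        exact zpow_le_zpow_right₀ hp1.le (by omega)
      simp at this
      linarith
    -- norm of p x^2
    have hnormpx : ‖(p : ℚ_[p]) * x ^ 2‖ = (p:ℝ) ^ (-(1 + 2*v)) := by
      rw [norm_mul, norm_pow, Padic.norm_p, hxnorm, ← zpow_natCast ((p:ℝ)^(-v)) 2,
        ← zpow_mul, ← zpow_neg_one, ← zpow_add₀ (ne_of_gt hp0)]
      ring_nf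
    have hne : ‖(1 : ℚ_[p])‖ ≠ ‖(p : ℚ_[p]) * x ^ 2‖ := by
      rw [norm_one, hnormpx, ← zpow_zero (p:ℝ)]
      rw [Ne, zpow_right_inj₀ hp0 hpne1]
      omega
    have hsum : ‖1 + (p : ℚ_[p]) * x ^ 2‖ = (p:ℝ) ^ (-(1 + 2*v)) := by
      rw [Padic.add_eq_max_of_ne hne, hnormpx, norm_one,
        max_eq_right]
      rw [← zpow_zero (p:ℝ)]
      apply zpow_le_zpow_right₀ hp1.le
      omega
    have hy0 : y ≠ 0 := by
      rintro rfl
      rw [← hy] at hsum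
      simp only [ne_eq, OfNat.ofNat_ne_zero, not_false_eq_true, zero_pow, norm_zero] at hsum
      have : (0:ℝ) < (p:ℝ) ^ (-(1 + 2*v)) := zpow_pos hp0 _
      linarith
    have hynorm : ‖y ^ 2‖ = (p:ℝ) ^ (-(2 * y.valuation)) := by
      rw [norm_pow, Padic.norm_eq_zpow_neg_valuation hy0, ← zpow_natCast _ 2, ← zpow_mul]
      ring_nf
    rw [hy, hsum] at hynorm
    rw [zpow_right_inj₀ hp0 hpne1] at hynorm
    omega
end

section
/- Let x ∈ ℚ_2. Then v_2(x) ≥ 0 if and only if 1 + 2x³ is a cube in ℚ_2. -/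
open Polynomial

theorem stmt_17 (x : ℚ_[2]) :
    ‖x‖ ≤ 1 ↔ ∃ y : ℚ_[2], y ^ 3 = 1 + 2 * x ^ 3 := by
  constructor
  · intro hx
    -- x is a 2-adic integer
    set x' : ℤ_[2] := ⟨x, hx⟩ with hx'
    set c : ℤ_[2] := 1 + 2 * x' ^ 3 with hc
    set F : Polynomial ℤ_[2] := X ^ 3 - C c with hF
    have hd : F.derivative = C 3 * X ^ 2 := by
      simp [hF]
      rw [← C_1, ← C_add]; norm_num
    have h3 : ‖(3 : ℤ_[2])‖ = 1 := by
      have h1 : ‖(3 : ℤ_[2])‖ ≤ 1 := PadicInt.norm_le_one _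
      have h2 : ¬ ‖(3 : ℤ_[2])‖ < 1 := by
        have := (PadicInt.norm_int_lt_one_iff_dvd (p := 2) 3)
        intro h
        have : ((2:ℤ) ∣ 3) := this.mp (by exact_mod_cast h)
        omega
      linarith [lt_or_eq_of_le h1]
    have heval : F.eval 1 = -(2 * x' ^ 3) := by
      simp [hF, hc]
    have hderiv : F.derivative.eval 1 = 3 := by
      rw [hd]; simp
    have hnorm : ‖F.eval 1‖ < ‖F.derivative.eval 1‖ ^ 2 := by
      rw [heval, hderiv, h3, one_pow, norm_neg]
      calc ‖(2 : ℤ_[2]) * x' ^ 3‖ ≤ ‖(2 : ℤ_[2])‖ * 1 := by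
            rw [norm_mul]
            gcongr
            exact PadicInt.norm_le_one _
        _ < 1 := by
            rw [mul_one]
            have : ‖(2 : ℤ_[2])‖ = 2⁻¹ := by
              simpa using PadicInt.norm_p (p := 2)
            rw [this]; norm_num
    obtain ⟨z, hz, -⟩ := hensels_lemma hnorm
    have hz3 : z ^ 3 = c :=
      sub_eq_zero.mp (by simpa [hF] using hz)
    refine ⟨(z : ℚ_[2]), ?_⟩
    have := congrArg (PadicInt.Coe.ringHom (p := 2)) hz3
    push_cast at this
    convert this using 2 <;> simp [hc, hx'] <;> rfl
  · rintro ⟨y, hy⟩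
    by_contra hx
    push_neg at hx
    have hx0 : x ≠ 0 := by
      intro h; rw [h] at hx; simp at hx; linarith
    have h2x : (2 : ℚ_[2]) * x ^ 3 ≠ 0 := by
      apply mul_ne_zero
      · exact two_ne_zero
      · exact pow_ne_zero _ hx0
    have hvx : x.valuation ≤ -1 := by
      by_contra h
      push_neg at h
      exact absurd ((Padic.norm_le_one_iff_val_nonneg x).mpr (by omega)) (not_le.mpr hx)
    have h2 : ‖(2:ℚ_[2])‖ = 2⁻¹ := by simpa using Padic.norm_p (p := 2)
    have hxn : ‖x‖ = (2:ℝ) ^ (-x.valuation) := by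
      simpa using Padic.norm_eq_zpow_neg_valuation hx0
    have hx2 : (2:ℝ) ≤ ‖x‖ := by
      rw [hxn]
      calc (2:ℝ) = (2:ℝ) ^ (1:ℤ) := (zpow_one 2).symm
        _ ≤ _ := zpow_le_zpow_right₀ one_le_two (by omega)
    have hbig : 1 < ‖(2:ℚ_[2]) * x ^ 3‖ := by
      rw [norm_mul, norm_pow, h2]
      nlinarith [pow_le_pow_left₀ (by norm_num : (0:ℝ) ≤ 2) hx2 3]
    have hne : ‖(1:ℚ_[2])‖ ≠ ‖(2:ℚ_[2]) * x ^ 3‖ := by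
      simp only [norm_one]; linarith
    have hy0 : y ≠ 0 := by
      intro h
      rw [h] at hy
      have h1 : ‖(1 : ℚ_[2]) + 2 * x ^ 3‖ = 0 := by rw [← hy]; simp
      rw [Padic.add_eq_max_of_ne hne] at h1
      have := le_max_right ‖(1:ℚ_[2])‖ ‖(2:ℚ_[2]) * x ^ 3‖
      rw [h1] at this
      linarith
    have hyn : ‖y‖ = (2:ℝ) ^ (-y.valuation) := by
      simpa using Padic.norm_eq_zpow_neg_valuation hy0
    have hnorm3 : ‖y‖ ^ 3 = 2⁻¹ * ‖x‖ ^ 3 := by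
      have h1 : ‖y ^ 3‖ = ‖(1:ℚ_[2]) + 2 * x ^ 3‖ := by rw [hy]
      rw [Padic.add_eq_max_of_ne hne,
        max_eq_right (le_of_lt (by rw [norm_one]; exact hbig)), norm_pow, norm_mul,
        norm_pow, h2] at h1
      exact h1
    have hz : (2:ℝ) ^ (-y.valuation * 3) = (2:ℝ) ^ (-1 + -x.valuation * 3) := by
      rw [zpow_add₀ (by norm_num : (2:ℝ) ≠ 0), zpow_mul, zpow_mul]
      push_cast
      rw [← hxn, ← hyn]
      simpa [zpow_neg] using hnorm3
    have := (zpow_right_inj₀ (by norm_num : (0:ℝ) < 2) (by norm_num)).mp hz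
    omega
end
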